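/- Gentle measurement lemma: if ρ is a density matrix and P an orthogonal projection with tr(ρP) ≥ 1 − λ for 0 ≤ λ ≤ 1, then ‖ρ − PρP‖₁ ≤ 2√λ. -/

import Mathlib

open Matrix
open scoped ComplexOrder

/-- A density matrix: positive semidefinite with unit trace. -/
def IsDensityMatrix {n : ℕ} (ρ : Matrix (Fin n) (Fin n) ℂ) : Prop :=
  ρ.PosSemidef ∧ ρ.trace = 1

/-- The trace norm of a (square complex) matrix: `tr √(AᴴA)`. -/
noncomputable def traceNorm {n : ℕ} (A : Matrix (Fin n) (Fin n) ℂ) : ℝ :=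
  ((Matrix.posSemidef_conjTranspose_mul_self A).1.eigenvectorUnitary.1 *
    diagonal ((fun x : ℝ => (x : ℂ)) ∘ Real.sqrt ∘ (Matrix.posSemidef_conjTranspose_mul_self A).1.eigenvalues) *
    (star (Matrix.posSemidef_conjTranspose_mul_self A).1.eigenvectorUnitary : Matrix (Fin n) (Fin n) ℂ)).trace.re

/-- Square root of a PSD matrix (as in the old Mathlib). -/
noncomputable def Matrix.PosSemidef.sqrt {n : ℕ} {S : Matrix (Fin n) (Fin n) ℂ} (hS : S.PosSemidef) :
    Matrix (Fin n) (Fin n) ℂ :=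
  hS.1.eigenvectorUnitary.1 *
    diagonal ((fun x : ℝ => (x : ℂ)) ∘ Real.sqrt ∘ hS.1.eigenvalues) *
    (star hS.1.eigenvectorUnitary : Matrix (Fin n) (Fin n) ℂ)

lemma Matrix.PosSemidef.posSemidef_sqrt {n : ℕ} {S : Matrix (Fin n) (Fin n) ℂ}
    (hS : S.PosSemidef) : hS.sqrt.PosSemidef := by
  have hd : (diagonal ((fun x : ℝ => (x : ℂ)) ∘ Real.sqrt ∘ hS.1.eigenvalues)).PosSemidef := by
    refine PosSemidef.diagonal fun i => ?_
    simp only [Function.comp_apply, Pi.zero_apply]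
    exact_mod_cast Real.sqrt_nonneg _
  have h := hd.mul_mul_conjTranspose_same (hS.1.eigenvectorUnitary : Matrix (Fin n) (Fin n) ℂ)
  rw [← star_eq_conjTranspose] at h
  exact h

lemma Matrix.PosSemidef.sqrt_mul_self {n : ℕ} {S : Matrix (Fin n) (Fin n) ℂ}
    (hS : S.PosSemidef) : hS.sqrt * hS.sqrt = S := by
  set V : Matrix (Fin n) (Fin n) ℂ := hS.1.eigenvectorUnitary.1
  have hV : (star hS.1.eigenvectorUnitary : Matrix (Fin n) (Fin n) ℂ) * V = 1 :=
    Unitary.coe_star_mul_self _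
  have hd : diagonal ((fun x : ℝ => (x : ℂ)) ∘ Real.sqrt ∘ hS.1.eigenvalues) *
      diagonal ((fun x : ℝ => (x : ℂ)) ∘ Real.sqrt ∘ hS.1.eigenvalues) =
      diagonal (RCLike.ofReal ∘ hS.1.eigenvalues) := by
    rw [diagonal_mul_diagonal]
    congr 1
    funext i
    simp only [Function.comp_apply]
    rw [← Complex.ofReal_mul, Real.mul_self_sqrt (hS.eigenvalues_nonneg i)]
    rfl
  conv_rhs => rw [hS.1.spectral_theorem, Unitary.conjStarAlgAut_apply]
  unfold Matrix.PosSemidef.sqrt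
  calc _ = V * (diagonal ((fun x : ℝ => (x : ℂ)) ∘ Real.sqrt ∘ hS.1.eigenvalues) *
      ((star hS.1.eigenvectorUnitary : Matrix (Fin n) (Fin n) ℂ) * V) *
      diagonal ((fun x : ℝ => (x : ℂ)) ∘ Real.sqrt ∘ hS.1.eigenvalues)) *
      (star hS.1.eigenvectorUnitary : Matrix (Fin n) (Fin n) ℂ) := by
        simp only [Matrix.mul_assoc]; rfl
    _ = _ := by
        rw [hV, Matrix.mul_one, hd]

namespace GM

variable {n : ℕ}

lemma trace_self_re (A : Matrix (Fin n) (Fin n) ℂ) :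
    (A * Aᴴ).trace.re = ∑ p : Fin n × Fin n, ‖A p.1 p.2‖ ^ 2 := by
  simp [Matrix.trace, Matrix.mul_apply, Matrix.diag, Matrix.conjTranspose_apply,
    Fintype.sum_prod_type, Complex.mul_conj, Complex.normSq_eq_norm_sq,
    ← Complex.ofReal_pow]

lemma trace_self_re' (B : Matrix (Fin n) (Fin n) ℂ) :
    (Bᴴ * B).trace.re = ∑ p : Fin n × Fin n, ‖B p.2 p.1‖ ^ 2 := by
  have h : (Bᴴ * B).trace = (B * Bᴴ).trace := Matrix.trace_mul_comm _ _
  rw [h, trace_self_re]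
  exact Fintype.sum_equiv (Equiv.prodComm _ _) _ _ (fun p => rfl)

/-- Cauchy–Schwarz for the Frobenius inner product, phrased via traces. -/
lemma frob_cs (A B : Matrix (Fin n) (Fin n) ℂ) :
    |((A * B).trace).re| ≤ Real.sqrt ((A * Aᴴ).trace.re) * Real.sqrt ((Bᴴ * B).trace.re) := by
  classical
  set x : EuclideanSpace ℂ (Fin n × Fin n) := WithLp.toLp 2 (fun p : Fin n × Fin n => star (A p.1 p.2)) with hxdef
  set y : EuclideanSpace ℂ (Fin n × Fin n) := WithLp.toLp 2 (fun p : Fin n × Fin n => B p.2 p.1) with hydef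
  have hxy : (inner ℂ x y : ℂ) = (A * B).trace := by
    simp [PiLp.inner_apply, RCLike.inner_apply, hxdef, hydef, Matrix.trace, Matrix.diag,
      Matrix.mul_apply, Fintype.sum_prod_type]
    exact Finset.sum_congr rfl fun i _ => Finset.sum_congr rfl fun j _ => mul_comm _ _
  have hx : ‖x‖ = Real.sqrt ((A * Aᴴ).trace.re) := by
    rw [EuclideanSpace.norm_eq, trace_self_re]
    congr 1
    exact Finset.sum_congr rfl fun p _ => by simp [hxdef]
  have hy : ‖y‖ = Real.sqrt ((Bᴴ * B).trace.re) := by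
    rw [EuclideanSpace.norm_eq, trace_self_re']
  calc |((A * B).trace).re| = |(inner ℂ x y : ℂ).re| := by rw [hxy]
    _ ≤ ‖(inner ℂ x y : ℂ)‖ := Complex.abs_re_le_norm _
    _ ≤ ‖x‖ * ‖y‖ := norm_inner_le_norm _ _
    _ = _ := by rw [hx, hy]

/-- The trace of a PSD matrix has nonnegative real part. -/
lemma trace_psd_nonneg {S : Matrix (Fin n) (Fin n) ℂ} (hS : S.PosSemidef) :
    0 ≤ S.trace.re := by
  have h1 : S = hS.sqrt * hS.sqrtᴴ := by
    rw [hS.posSemidef_sqrt.1.eq, hS.sqrt_mul_self]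
  rw [h1, trace_self_re]
  positivity

/-- The trace of a product of PSD matrices has nonnegative real part. -/
lemma trace_psd_mul_nonneg {S T : Matrix (Fin n) (Fin n) ℂ}
    (hS : S.PosSemidef) (hT : T.PosSemidef) : 0 ≤ (S * T).trace.re := by
  have h1 : (S * T).trace = (hS.sqrtᴴ * T * hS.sqrt).trace := by
    rw [hS.posSemidef_sqrt.1.eq]
    conv_lhs => rw [← hS.sqrt_mul_self]
    rw [Matrix.trace_mul_cycle hS.sqrt T hS.sqrt]
  rw [h1]
  exact trace_psd_nonneg (hT.conjTranspose_mul_mul_same _)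

lemma collapse {V : Matrix (Fin n) (Fin n) ℂ} (hV : star V * V = 1) (d f : Fin n → ℂ) :
    (V * diagonal d * star V) * (V * diagonal f * star V)
      = V * diagonal (fun i => d i * f i) * star V := by
  have h : diagonal d * diagonal f = diagonal (fun i => d i * f i) := by
    rw [diagonal_mul_diagonal]
  calc (V * diagonal d * star V) * (V * diagonal f * star V)
      = V * (diagonal d * ((star V * V) * (diagonal f * star V))) := by
        simp only [Matrix.mul_assoc]
    _ = V * diagonal (fun i => d i * f i) * star V := by
        rw [hV, Matrix.one_mul, ← Matrix.mul_assoc (diagonal d), h, Matrix.mul_assoc]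

/-- Polar-type decomposition: there is a contraction `U` with `tr (U M) = ‖M‖₁`. -/
lemma exists_contraction (M : Matrix (Fin n) (Fin n) ℂ) :
    ∃ U : Matrix (Fin n) (Fin n) ℂ,
      (U * M).trace.re = traceNorm M ∧ ((1 : Matrix (Fin n) (Fin n) ℂ) - Uᴴ * U).PosSemidef := by
  classical
  unfold traceNorm
  set hMM := Matrix.posSemidef_conjTranspose_mul_self M with hMMdef
  set H := hMM.sqrt with hHdef
  have hH : H.PosSemidef := hMM.posSemidef_sqrt
  set e : Fin n → ℝ := hH.1.eigenvalues with hedef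
  set V : Matrix (Fin n) (Fin n) ℂ := (hH.1.eigenvectorUnitary : Matrix (Fin n) (Fin n) ℂ) with hVdef
  have hV : star V * V = 1 := hH.1.eigenvectorUnitary.prop.1
  have hspec : H = V * diagonal (fun i => (e i : ℂ)) * star V := hH.1.spectral_theorem
  set Hp : Matrix (Fin n) (Fin n) ℂ := V * diagonal (fun i => ((e i : ℂ))⁻¹) * star V with hHpdef
  have hMM2 : Mᴴ * M = H * H := (hMM.sqrt_mul_self).symm
  refine ⟨Hp * Mᴴ, ?_, ?_⟩
  · have key : Hp * Mᴴ * M = H := by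
      rw [Matrix.mul_assoc, hMM2, ← Matrix.mul_assoc, hspec, hHpdef,
        GM.collapse hV, GM.collapse hV]
      refine congrArg (fun D => V * D * star V) (congrArg diagonal (funext fun i => ?_))
      by_cases h : e i = 0
      · simp [h]
      · have h' : (e i : ℂ) ≠ 0 := by exact_mod_cast h
        field_simp
    rw [key]; rfl
  · have hHp_star : Hpᴴ = Hp := by
      have hfstar : (star fun i => ((e i : ℂ))⁻¹) = fun i => ((e i : ℂ))⁻¹ := by
        funext i
        simp [Pi.star_apply, ← Complex.ofReal_inv]
      rw [hHpdef]
      simp only [conjTranspose_mul, conjTranspose_conjTranspose, diagonal_conjTranspose,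
        hfstar, star_eq_conjTranspose, Matrix.mul_assoc]
    have hU' : (Hp * Mᴴ)ᴴ = M * Hp := by
      rw [conjTranspose_mul, conjTranspose_conjTranspose, hHp_star]
    have hS_eq : (Hp * Mᴴ)ᴴ * (Hp * Mᴴ) = M * (Hp * Hp) * Mᴴ := by
      rw [hU']; simp only [Matrix.mul_assoc]
    set S := (Hp * Mᴴ)ᴴ * (Hp * Mᴴ) with hSdef
    have inner_eq : Hp * Hp * (H * H) * (Hp * Hp) = Hp * Hp := by
      rw [hspec, hHpdef, GM.collapse hV, GM.collapse hV, GM.collapse hV, GM.collapse hV]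
      refine congrArg (fun D => V * D * star V) (congrArg diagonal (funext fun i => ?_))
      by_cases h : e i = 0
      · simp [h]
      · have h' : (e i : ℂ) ≠ 0 := by exact_mod_cast h
        field_simp
    have hSS : S * S = S := by
      calc S * S = M * (Hp * Hp * (Mᴴ * M) * (Hp * Hp)) * Mᴴ := by
            rw [hS_eq]; try simp only [Matrix.mul_assoc]
        _ = M * (Hp * Hp) * Mᴴ := by rw [hMM2, inner_eq]
        _ = S := hS_eq.symm
    have hSH : Sᴴ = S := by
      rw [hSdef, conjTranspose_mul, conjTranspose_conjTranspose]
    have hfact : (1 : Matrix (Fin n) (Fin n) ℂ) - S = (1 - S)ᴴ * (1 - S) := by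
      rw [conjTranspose_sub, conjTranspose_one, hSH, Matrix.sub_mul, Matrix.one_mul,
        Matrix.mul_sub, Matrix.mul_one, hSS]
      abel
    rw [hfact]
    exact Matrix.posSemidef_conjTranspose_mul_self _

end GM

/-- Gentle measurement lemma: if `tr(ρP) ≥ 1 − λ` for a projection `P`,
then `‖ρ − PρP‖₁ ≤ 2√λ`. -/
theorem gentle_measurement {n : ℕ} (ρ P : Matrix (Fin n) (Fin n) ℂ) (l : ℝ)
    (hρ : IsDensityMatrix ρ) (hP : P.IsHermitian) (hProj : P * P = P)
    (hl0 : 0 ≤ l) (hl1 : l ≤ 1)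
    (htr : 1 - l ≤ (ρ * P).trace.re) :
    traceNorm (ρ - P * ρ * P) ≤ 2 * Real.sqrt l := by
  classical
  obtain ⟨hρpsd, hρtr⟩ := hρ
  set Q : Matrix (Fin n) (Fin n) ℂ := 1 - P with hQdef
  have hQH : Qᴴ = Q := by rw [hQdef, conjTranspose_sub, conjTranspose_one, hP.eq]
  have hQQ : Q * Q = Q := by
    rw [hQdef, Matrix.sub_mul, Matrix.one_mul, Matrix.mul_sub, Matrix.mul_one, hProj]
    abel
  set sρ : Matrix (Fin n) (Fin n) ℂ := hρpsd.sqrt with hsdef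
  have hs2 : sρ * sρ = ρ := hρpsd.sqrt_mul_self
  have hsH : sρᴴ = sρ := hρpsd.posSemidef_sqrt.1
  obtain ⟨U, hU1, hU2⟩ := GM.exists_contraction (ρ - P * ρ * P)
  have htρ1 : ρ.trace.re = 1 := by rw [hρtr]; simp
  set t : ℝ := (ρ * Q).trace.re with htdef
  have hQρQ : (Q * ρ * Q).trace = (ρ * Q).trace := by
    rw [Matrix.trace_mul_cycle Q ρ Q, hQQ, Matrix.trace_mul_comm]
  have hQρQt : (Q * ρ * Q).trace.re = t := congrArg Complex.re hQρQ
  have hQρQpsd : (Q * ρ * Q).PosSemidef := by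
    have h := hρpsd.conjTranspose_mul_mul_same Q
    rwa [hQH] at h
  have hPρPpsd : (P * ρ * P).PosSemidef := by
    have h := hρpsd.conjTranspose_mul_mul_same P
    rwa [hP.eq] at h
  have ht0 : 0 ≤ t := by
    rw [htdef, ← hQρQ]
    exact GM.trace_psd_nonneg hQρQpsd
  have hsplit : t = 1 - (ρ * P).trace.re := by
    have h : (ρ * Q).trace = ρ.trace - (ρ * P).trace := by
      rw [hQdef, Matrix.mul_sub, Matrix.mul_one, Matrix.trace_sub]
    rw [htdef, h, Complex.sub_re, htρ1]
  have htl : t ≤ l := by rw [hsplit]; linarith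
  have hPρPt : (P * ρ * P).trace.re = 1 - t := by
    have h : (P * ρ * P).trace = (ρ * P).trace := by
      rw [Matrix.trace_mul_cycle P ρ P, hProj, Matrix.trace_mul_comm]
    rw [congrArg Complex.re h]
    linarith [hsplit]
  have contract : ∀ X : Matrix (Fin n) (Fin n) ℂ, X.PosSemidef →
      (X * (Uᴴ * U)).trace.re ≤ X.trace.re := by
    intro X hX
    have h := GM.trace_psd_mul_nonneg hX hU2
    have hexp : (X * (1 - Uᴴ * U)).trace = X.trace - (X * (Uᴴ * U)).trace := by
      rw [Matrix.mul_sub, Matrix.mul_one, Matrix.trace_sub]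
    rw [hexp, Complex.sub_re] at h
    linarith
  -- first term
  have key1 : ((U * Q * sρ) * (U * Q * sρ)ᴴ).trace = ((Q * ρ * Q) * (Uᴴ * U)).trace := by
    have h1 : (U * Q * sρ) * (U * Q * sρ)ᴴ = U * (Q * ρ * Q) * Uᴴ := by
      rw [conjTranspose_mul, conjTranspose_mul, hsH, hQH]
      simp only [Matrix.mul_assoc]
      rw [← Matrix.mul_assoc sρ sρ, hs2]
    rw [h1, Matrix.trace_mul_cycle U (Q * ρ * Q) Uᴴ, Matrix.trace_mul_comm]
  have hb1 : |(U * (Q * ρ)).trace.re| ≤ Real.sqrt t := by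
    have hprod : U * (Q * ρ) = (U * Q * sρ) * sρ := by
      rw [Matrix.mul_assoc (U * Q), hs2, Matrix.mul_assoc]
    calc |(U * (Q * ρ)).trace.re| = |((U * Q * sρ) * sρ).trace.re| := by rw [hprod]
      _ ≤ Real.sqrt (((U * Q * sρ) * (U * Q * sρ)ᴴ).trace.re) *
            Real.sqrt ((sρᴴ * sρ).trace.re) := GM.frob_cs _ _
      _ ≤ Real.sqrt t * 1 := by
          have h1 : ((U * Q * sρ) * (U * Q * sρ)ᴴ).trace.re ≤ t := by
            rw [congrArg Complex.re key1]
            exact (contract _ hQρQpsd).trans hQρQt.le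
          have h2 : (sρᴴ * sρ).trace.re = 1 := by rw [hsH, hs2, htρ1]
          rw [h2, Real.sqrt_one]
          exact mul_le_mul_of_nonneg_right (Real.sqrt_le_sqrt h1) zero_le_one
      _ = Real.sqrt t := mul_one _
  -- second term
  have key2 : ((U * P * sρ) * (U * P * sρ)ᴴ).trace = ((P * ρ * P) * (Uᴴ * U)).trace := by
    have h1 : (U * P * sρ) * (U * P * sρ)ᴴ = U * (P * ρ * P) * Uᴴ := by
      rw [conjTranspose_mul, conjTranspose_mul, hsH, hP.eq]
      simp only [Matrix.mul_assoc]
      rw [← Matrix.mul_assoc sρ sρ, hs2]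
    rw [h1, Matrix.trace_mul_cycle U (P * ρ * P) Uᴴ, Matrix.trace_mul_comm]
  have key2B : ((sρ * Q)ᴴ * (sρ * Q)).trace.re = t := by
    have h1 : (sρ * Q)ᴴ * (sρ * Q) = Q * ρ * Q := by
      rw [conjTranspose_mul, hsH, hQH]
      simp only [Matrix.mul_assoc]
      rw [← Matrix.mul_assoc sρ sρ, hs2]
    rw [congrArg Complex.re (congrArg Matrix.trace h1), hQρQt]
  have hb2 : |(U * (P * ρ * Q)).trace.re| ≤ Real.sqrt t := by
    have hprod : U * (P * ρ * Q) = (U * P * sρ) * (sρ * Q) := by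
      simp only [Matrix.mul_assoc]
      rw [← Matrix.mul_assoc sρ sρ, hs2]
    calc |(U * (P * ρ * Q)).trace.re| = |((U * P * sρ) * (sρ * Q)).trace.re| := by rw [hprod]
      _ ≤ Real.sqrt (((U * P * sρ) * (U * P * sρ)ᴴ).trace.re) *
            Real.sqrt (((sρ * Q)ᴴ * (sρ * Q)).trace.re) := GM.frob_cs _ _
      _ ≤ 1 * Real.sqrt t := by
          have h1 : ((U * P * sρ) * (U * P * sρ)ᴴ).trace.re ≤ 1 := by
            rw [congrArg Complex.re key2]
            have := (contract _ hPρPpsd).trans hPρPt.le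
            linarith
          rw [key2B]
          exact mul_le_mul_of_nonneg_right (Real.sqrt_le_one.mpr h1) (Real.sqrt_nonneg _)
      _ = Real.sqrt t := one_mul _
  -- assemble
  have hdecomp : ρ - P * ρ * P = Q * ρ + P * ρ * Q := by
    rw [hQdef]
    noncomm_ring
  have hfin : (U * (ρ - P * ρ * P)).trace.re
      = (U * (Q * ρ)).trace.re + (U * (P * ρ * Q)).trace.re := by
    rw [hdecomp, Matrix.mul_add, Matrix.trace_add, Complex.add_re]
  have hsqrt : Real.sqrt t ≤ Real.sqrt l := Real.sqrt_le_sqrt htl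
  calc traceNorm (ρ - P * ρ * P) = (U * (ρ - P * ρ * P)).trace.re := hU1.symm
    _ = (U * (Q * ρ)).trace.re + (U * (P * ρ * Q)).trace.re := hfin
    _ ≤ |(U * (Q * ρ)).trace.re| + |(U * (P * ρ * Q)).trace.re| :=
        add_le_add (le_abs_self _) (le_abs_self _)
    _ ≤ Real.sqrt t + Real.sqrt t := add_le_add hb1 hb2
    _ = 2 * Real.sqrt t := by ring
    _ ≤ 2 * Real.sqrt l := by linarith
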